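/- Let R be a commutative ring such that for every a ∈ R, either a or 1−a is stable. Then R is locally stable. -/

import Mathlib

/-- A commutative ring has stable range 1. -/
def HasStableRange1 (R : Type*) [CommRing R] : Prop :=
  ∀ a b : R, Ideal.span {a} ⊔ Ideal.span {b} = ⊤ → ∃ y : R, IsUnit (a + b * y)

/-- An element `a` is stable if `R/aR` has stable range 1. -/
def IsStableElem {R : Type*} [CommRing R] (a : R) : Prop :=
  HasStableRange1 (R ⧸ Ideal.span {a})

/-- A commutative ring is locally stable. -/
def LocallyStable (R : Type*) [CommRing R] : Prop :=
  ∀ a b : R, Ideal.span {a} ⊔ Ideal.span {b} = ⊤ →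
    ∃ y : R, HasStableRange1 (R ⧸ Ideal.span {a + b * y})

/-- A clean ring: every element is the sum of an idempotent and a unit. -/
def IsCleanRing (R : Type*) [CommRing R] : Prop :=
  ∀ a : R, ∃ e u : R, IsIdempotentElem e ∧ IsUnit u ∧ a = e + u

/-- A ring has neat range 1. -/
def NeatRange1 (R : Type*) [CommRing R] : Prop :=
  ∀ a b : R, Ideal.span {a} ⊔ Ideal.span {b} = ⊤ →
    ∃ y : R, IsCleanRing (R ⧸ Ideal.span {a + b * y})

/-- A ring has almost stable range 1: every proper homomorphic image has stable range 1. -/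
def AlmostStableRange1 (R : Type*) [CommRing R] : Prop :=
  ∀ I : Ideal R, I ≠ ⊥ → HasStableRange1 (R ⧸ I)

/-- An elementary divisor ring: every rectangular matrix admits diagonal reduction. -/
def ElementaryDivisorRing (R : Type*) [CommRing R] : Prop :=
  ∀ (m n : ℕ) (A : Matrix (Fin m) (Fin n) R),
    ∃ (P : Matrix (Fin m) (Fin m) R) (Q : Matrix (Fin n) (Fin n) R),
      IsUnit P ∧ IsUnit Q ∧
      (∀ (i : Fin m) (j : Fin n), (i : ℕ) ≠ (j : ℕ) → (P * A * Q) i j = 0) ∧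
      (∀ (i i' : Fin m) (j j' : Fin n), (i : ℕ) = (j : ℕ) → (i' : ℕ) = (j' : ℕ) →
        (i' : ℕ) = (i : ℕ) + 1 → (P * A * Q) i j ∣ (P * A * Q) i' j')

/-- A ring is strongly completable. -/
def StronglyCompletable (R : Type*) [CommRing R] : Prop :=
  ∀ (n : ℕ) (hn : 0 < n) (a : Fin n → R) (d : R),
    (⨆ i, Ideal.span {a i}) = Ideal.span {d} →
    ∃ A : Matrix (Fin n) (Fin n) R, (∀ j, A ⟨0, hn⟩ j = a j) ∧ A.det = d

lemma hasStableRange1_of_surjective {A B : Type*} [CommRing A] [CommRing B]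
    (f : A →+* B) (hf : Function.Surjective f) (hA : HasStableRange1 A) :
    HasStableRange1 B := by
  intro p q hpq
  have h1 : (1 : B) ∈ Ideal.span {p} ⊔ Ideal.span {q} := hpq ▸ Submodule.mem_top
  rcases Submodule.mem_sup.mp h1 with ⟨x, hx, y, hy, hxy⟩
  rcases Ideal.mem_span_singleton'.mp hx with ⟨c, rfl⟩
  rcases Ideal.mem_span_singleton'.mp hy with ⟨d, rfl⟩
  obtain ⟨P, rfl⟩ := hf p
  obtain ⟨Q, rfl⟩ := hf q
  obtain ⟨C, hC⟩ := hf c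
  obtain ⟨D, hD⟩ := hf d
  set k : A := 1 - C * P - D * Q with hk
  have hker : f k = 0 := by
    have : f k = 1 - c * f P - d * f Q := by
      rw [hk]; push_cast [map_sub, map_mul, map_one, hC, hD]; ring
    rw [this]; linear_combination -hxy
  have hspan : Ideal.span {P} ⊔ Ideal.span {D * Q + k} = ⊤ := by
    rw [Ideal.eq_top_iff_one]
    exact Submodule.mem_sup.mpr ⟨C * P, Ideal.mem_span_singleton'.mpr ⟨C, rfl⟩,
      D * Q + k, Ideal.mem_span_singleton'.mpr ⟨1, one_mul _⟩, by rw [hk]; ring⟩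
  obtain ⟨t, ht⟩ := hA P (D * Q + k) hspan
  refine ⟨f D * f t, ?_⟩
  have heq : f (P + (D * Q + k) * t) = f P + f Q * (f D * f t) := by
    rw [map_add, map_mul, map_add, map_mul, hker]; ring
  have := ht.map f
  rwa [heq] at this

lemma isStableElem_of_dvd {R : Type*} [CommRing R] {x z : R} (hdvd : z ∣ x)
    (hx : IsStableElem x) : IsStableElem z := by
  have hle : Ideal.span {x} ≤ Ideal.span {z} :=
    Ideal.span_singleton_le_span_singleton.mpr hdvd
  refine hasStableRange1_of_surjective (Ideal.Quotient.factor hle) ?_ hx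
  intro b
  obtain ⟨r, rfl⟩ := Ideal.Quotient.mk_surjective b
  exact ⟨Ideal.Quotient.mk _ r, Ideal.Quotient.factor_mk hle r⟩

theorem stmt6 (R : Type*) [CommRing R]
    (h : ∀ a : R, IsStableElem a ∨ IsStableElem (1 - a)) :
    LocallyStable R := by
  intro a b hab
  have h1 : (1 : R) ∈ Ideal.span {a} ⊔ Ideal.span {b} := hab ▸ Submodule.mem_top
  rcases Submodule.mem_sup.mp h1 with ⟨x, hx, y, hy, hxy⟩
  rcases Ideal.mem_span_singleton'.mp hx with ⟨u, rfl⟩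
  rcases Ideal.mem_span_singleton'.mp hy with ⟨v, rfl⟩
  -- hxy : u * a + v * b = 1
  rcases h (a * (u + b * (u * v - 1))) with hc | hc
  · exact ⟨0, isStableElem_of_dvd ⟨u + b * (u * v - 1), by ring⟩ hc⟩
  · refine ⟨v * v, isStableElem_of_dvd ⟨b, ?_⟩ hc⟩
    linear_combination (-(1 + b * v)) * hxy
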